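/- Let S = [[0,-1],[1,0]], T = [[1,1],[0,1]] and V = T^2 = [[1,2],[0,1]] in SL(2,ℤ), and let Γ_u be the subgroup of SL(2,ℤ) generated by -I, V^2, VS and SV. Let X = [[2,1],[0,1]] ∈ GL(2,ℚ). Then Γ_u has index 6 in SL(2,ℤ), and conjugation by X carries Γ_u onto the principal congruence subgroup of level 2: the set {X^{-1} A X : A ∈ Γ_u} ⊂ GL(2,ℚ) equals the image in GL(2,ℚ) of Γ(2) = {A ∈ SL(2,ℤ) : A ≡ I mod 2}. -/

import Mathlib

open scoped MatrixGroups

/-- `S = [[0,-1],[1,0]]` in `SL(2,ℤ)`. -/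
def Smat : SL(2, ℤ) := ⟨!![0, -1; 1, 0], by norm_num [Matrix.det_fin_two_of]⟩

/-- `T = [[1,1],[0,1]]` in `SL(2,ℤ)`. -/
def Tmat : SL(2, ℤ) := ⟨!![1, 1; 0, 1], by norm_num [Matrix.det_fin_two_of]⟩

/-- `V = T² = [[1,2],[0,1]]` in `SL(2,ℤ)`. -/
def Vmat : SL(2, ℤ) := ⟨!![1, 2; 0, 1], by norm_num [Matrix.det_fin_two_of]⟩

/-- `-I` in `SL(2,ℤ)`. -/
def negI : SL(2, ℤ) := ⟨!![-1, 0; 0, -1], by norm_num [Matrix.det_fin_two_of]⟩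

/-- `Γ_u = ±⟨V², VS, SV⟩ ≤ SL(2,ℤ)`. -/
def GammaU : Subgroup SL(2, ℤ) :=
  Subgroup.closure {negI, Vmat ^ 2, Vmat * Smat, Smat * Vmat}

/-- `X = [[2,1],[0,1]]` as a rational matrix. -/
def Xmat : Matrix (Fin 2) (Fin 2) ℚ := !![2, 1; 0, 1]

-- auxiliary development
def Bmat : SL(2, ℤ) := ⟨!![1, 0; 2, 1], by norm_num [Matrix.det_fin_two_of]⟩

lemma Tmat_eq : Tmat = ModularGroup.T := by
  ext i j; fin_cases i <;> fin_cases j <;> rfl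

lemma Vmat_eq : Vmat = Tmat ^ 2 := by
  ext i j; fin_cases i <;> fin_cases j <;> rfl

lemma coe_V_zpow (n : ℤ) : ((Vmat ^ n : SL(2,ℤ)) : Matrix (Fin 2) (Fin 2) ℤ) = !![1, 2*n; 0, 1] := by
  have : Vmat ^ n = ModularGroup.T ^ (2 * n) := by
    rw [Vmat_eq, Tmat_eq, ← zpow_natCast (ModularGroup.T) 2, ← _root_.zpow_mul]
    norm_num
  rw [this, ModularGroup.coe_T_zpow]


lemma Smat_inv : (Smat)⁻¹ = (⟨!![0, 1; -1, 0], by norm_num [Matrix.det_fin_two_of]⟩ : SL(2,ℤ)) := by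
  apply inv_eq_of_mul_eq_one_right
  ext i j; fin_cases i <;> fin_cases j <;> rfl

lemma Vmat_inv : (Vmat)⁻¹ = (⟨!![1, -2; 0, 1], by norm_num [Matrix.det_fin_two_of]⟩ : SL(2,ℤ)) := by
  apply inv_eq_of_mul_eq_one_right
  ext i j; fin_cases i <;> fin_cases j <;> rfl

lemma Bmat_conj : Bmat = Smat * Vmat⁻¹ * Smat⁻¹ := by
  rw [Smat_inv, Vmat_inv]
  ext i j; fin_cases i <;> fin_cases j <;> rfl

lemma coe_B_zpow (n : ℤ) : ((Bmat ^ n : SL(2,ℤ)) : Matrix (Fin 2) (Fin 2) ℤ) = !![1, 0; 2*n, 1] := by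
  have h1 : Bmat ^ n = Smat * Vmat ^ (-n) * Smat⁻¹ := by
    have : Bmat = MulAut.conj Smat (Vmat⁻¹) := by simpa [MulAut.conj_apply] using Bmat_conj
    rw [this, ← map_zpow, MulAut.conj_apply, _root_.inv_zpow, ← _root_.zpow_neg]
  rw [h1]
  simp only [Matrix.SpecialLinearGroup.coe_mul, coe_V_zpow]
  rw [Smat_inv]
  ext i j; fin_cases i <;> fin_cases j <;> simp [Smat, Matrix.mul_fin_two] <;> ring

open CongruenceSubgroup Subgroup in
def CL : Subgroup SL(2,ℤ) := Subgroup.closure {negI, Vmat, Bmat}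

lemma negI_CL : negI ∈ CL := Subgroup.subset_closure (by simp)
lemma V_CL : Vmat ∈ CL := Subgroup.subset_closure (by simp)
lemma B_CL : Bmat ∈ CL := Subgroup.subset_closure (by simp)

lemma castZ (n : ℕ) (x y : ℤ) : ((x : ZMod n) = (y : ZMod n)) ↔ (n:ℤ) ∣ x - y := by
  rw [ZMod.intCast_eq_intCast_iff, Int.modEq_iff_dvd, dvd_sub_comm]

lemma near_div (a c : ℤ) (hc : c ≠ 0) : ∃ q, (a - 2*c*q).natAbs ≤ c.natAbs := by
  rcases lt_or_gt_of_ne hc with hneg | hpos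
  · set m : ℤ := 2 * (-c) with hm
    have hm0 : 0 < m := by omega
    have h1 : 0 ≤ a % m := Int.emod_nonneg a (by omega)
    have h2 : a % m < m := Int.emod_lt_of_pos a hm0
    have h3 : m * (a / m) + a % m = a := Int.mul_ediv_add_emod a m
    rcases le_or_gt (a % m) (-c) with h | h
    · refine ⟨-(a / m), ?_⟩
      have : a - 2*c*(-(a/m)) = a % m := by
        have : a % m = a - m * (a/m) := by omega
        rw [this, hm]; try ring
      rw [this]; omega
    · refine ⟨-(a / m) - 1, ?_⟩
      have : a - 2*c*(-(a/m) - 1) = a % m - m := by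
        have : a % m = a - m * (a/m) := by omega
        rw [this, hm]; try ring
      rw [this]; omega
  · set m : ℤ := 2 * c with hm
    have hm0 : 0 < m := by omega
    have h1 : 0 ≤ a % m := Int.emod_nonneg a (by omega)
    have h2 : a % m < m := Int.emod_lt_of_pos a hm0
    have h3 : m * (a / m) + a % m = a := Int.mul_ediv_add_emod a m
    rcases le_or_gt (a % m) c with h | h
    · refine ⟨a / m, ?_⟩
      have : a - 2*c*(a/m) = a % m := by
        have : a % m = a - m * (a/m) := by omega
        rw [this, hm]; try ring
      rw [this]; omega
    · refine ⟨a / m + 1, ?_⟩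
      have : a - 2*c*(a/m + 1) = a % m - m := by
        have : a % m = a - m * (a/m) := by omega
        rw [this, hm]; try ring
      rw [this]; omega

lemma Vk_mul_coe (k : ℤ) (M : SL(2,ℤ)) :
    ((Vmat^k * M : SL(2,ℤ)) : Matrix (Fin 2) (Fin 2) ℤ) =
    !![M.1 0 0 + 2*k*(M.1 1 0), M.1 0 1 + 2*k*(M.1 1 1); M.1 1 0, M.1 1 1] := by
  rw [Matrix.SpecialLinearGroup.coe_mul, coe_V_zpow, Matrix.eta_fin_two M.1, Matrix.mul_fin_two]
  ext i j; fin_cases i <;> fin_cases j <;> simp <;> ring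

lemma Bk_mul_coe (k : ℤ) (M : SL(2,ℤ)) :
    ((Bmat^k * M : SL(2,ℤ)) : Matrix (Fin 2) (Fin 2) ℤ) =
    !![M.1 0 0, M.1 0 1; M.1 1 0 + 2*k*(M.1 0 0), M.1 1 1 + 2*k*(M.1 0 1)] := by
  rw [Matrix.SpecialLinearGroup.coe_mul, coe_B_zpow, Matrix.eta_fin_two M.1, Matrix.mul_fin_two]
  ext i j; fin_cases i <;> fin_cases j <;> simp <;> ring

open CongruenceSubgroup in
lemma V_mem2 : Vmat ∈ Gamma 2 := by
  rw [Gamma_mem]; refine ⟨?_, ?_, ?_, ?_⟩ <;> decide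
open CongruenceSubgroup in
lemma B_mem2 : Bmat ∈ Gamma 2 := by
  rw [Gamma_mem]; refine ⟨?_, ?_, ?_, ?_⟩ <;> decide
open CongruenceSubgroup in
lemma negI_mem2 : negI ∈ Gamma 2 := by
  rw [Gamma_mem]; refine ⟨?_, ?_, ?_, ?_⟩ <;> decide

open CongruenceSubgroup in
lemma gamma2_le_CL : Gamma 2 ≤ CL := by
  intro M₀ hM₀
  suffices h : ∀ n (M : SL(2,ℤ)), M ∈ Gamma 2 → (M.1 0 0).natAbs + (M.1 1 0).natAbs ≤ n → M ∈ CL from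
    h _ M₀ hM₀ le_rfl
  clear hM₀ M₀
  intro n
  induction n using Nat.strong_induction_on with
  | _ n ih =>
  intro M hMg hn
  have hdet : M.1 0 0 * M.1 1 1 - M.1 0 1 * M.1 1 0 = 1 := by
    have := M.2; rwa [Matrix.det_fin_two] at this
  have hM := hMg
  rw [Gamma_mem] at hM
  have ha : (2:ℤ) ∣ M.1 0 0 - 1 := (castZ 2 _ 1).mp (by exact_mod_cast hM.1)
  have hb : (2:ℤ) ∣ M.1 0 1 - 0 := (castZ 2 _ 0).mp (by exact_mod_cast hM.2.1)
  have hc : (2:ℤ) ∣ M.1 1 0 - 0 := (castZ 2 _ 0).mp (by exact_mod_cast hM.2.2.1)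
  have hd : (2:ℤ) ∣ M.1 1 1 - 1 := (castZ 2 _ 1).mp (by exact_mod_cast hM.2.2.2)
  rcases eq_or_ne (M.1 1 0) 0 with hc0 | hc0
  · have had : M.1 0 0 * M.1 1 1 = 1 := by rw [hc0] at hdet; simpa using hdet
    rcases Int.mul_eq_one_iff_eq_one_or_neg_one.mp had with ⟨ha1, hd1⟩ | ⟨ha1, hd1⟩
    · obtain ⟨k, hk⟩ := hb
      have hMeq : M = Vmat ^ k := by
        apply Subtype.ext
        rw [coe_V_zpow, Matrix.eta_fin_two M.1, ha1, hc0, hd1, show M.1 0 1 = 2*k by omega]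
      rw [hMeq]; exact zpow_mem V_CL k
    · obtain ⟨k, hk⟩ := hb
      have hMeq : M = negI * Vmat ^ (-k) := by
        apply Subtype.ext
        rw [Matrix.SpecialLinearGroup.coe_mul, coe_V_zpow,
          Matrix.eta_fin_two M.1, ha1, hc0, hd1, show M.1 0 1 = 2*k by omega]
        ext i j; fin_cases i <;> fin_cases j <;> simp [negI, Matrix.mul_fin_two] <;> ring
      rw [hMeq]; exact mul_mem negI_CL (zpow_mem V_CL (-k))
  · rcases lt_trichotomy ((M.1 0 0).natAbs) ((M.1 1 0).natAbs) with hlt | heq | hgt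
    · -- reduce c
      have ha0 : M.1 0 0 ≠ 0 := by intro h; rw [h] at ha; omega
      obtain ⟨q, hq⟩ := near_div (M.1 1 0) (M.1 0 0) ha0
      set M' := Bmat ^ (-q) * M with hM'
      have hcoe := Bk_mul_coe (-q) M
      have h00 : M'.1 0 0 = M.1 0 0 := by rw [hM', hcoe]; simp
      have h01 : M'.1 0 1 = M.1 0 1 := by rw [hM', hcoe]; simp
      have h10 : M'.1 1 0 = M.1 1 0 - 2 * M.1 0 0 * q := by rw [hM', hcoe]; simp; ring
      have hmem' : M' ∈ Gamma 2 := mul_mem (zpow_mem B_mem2 (-q)) hMg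
      have hpar : (2:ℤ) ∣ M'.1 1 0 := by
        have h2 : M'.1 1 0 = M.1 1 0 - 2 * (M.1 0 0 * q) := by rw [h10]; ring
        omega
      have hlt' : (M'.1 1 0).natAbs < (M.1 0 0).natAbs := by
        rw [h10]; rw [h10] at hpar; omega
      have hx : M' ∈ CL := ih ((M'.1 0 0).natAbs + (M'.1 1 0).natAbs) (by omega) M' hmem' le_rfl
      have hMeq : M = Bmat ^ q * M' := by rw [hM']; group
      rw [hMeq]; exact mul_mem (zpow_mem B_CL q) hx
    · exfalso; omega
    · -- reduce a
      obtain ⟨q, hq⟩ := near_div (M.1 0 0) (M.1 1 0) hc0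
      set M' := Vmat ^ (-q) * M with hM'
      have hcoe := Vk_mul_coe (-q) M
      have h00 : M'.1 0 0 = M.1 0 0 - 2 * M.1 1 0 * q := by rw [hM', hcoe]; simp; ring
      have h10 : M'.1 1 0 = M.1 1 0 := by rw [hM', hcoe]; simp
      have hmem' : M' ∈ Gamma 2 := mul_mem (zpow_mem V_mem2 (-q)) hMg
      have hpar : (2:ℤ) ∣ M'.1 0 0 - 1 := by
        have h2 : M'.1 0 0 = M.1 0 0 - 2 * (M.1 1 0 * q) := by rw [h00]; ring
        omega
      have hlt' : (M'.1 0 0).natAbs < (M.1 1 0).natAbs := by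
        rw [h00]; rw [h00] at hpar; omega
      have hx : M' ∈ CL := ih ((M'.1 0 0).natAbs + (M'.1 1 0).natAbs) (by omega) M' hmem' le_rfl
      have hMeq : M = Vmat ^ q * M' := by rw [hM']; group
      rw [hMeq]; exact mul_mem (zpow_mem V_CL q) hx

open CongruenceSubgroup in
lemma gen2 : Gamma 2 = CL := by
  refine le_antisymm gamma2_le_CL ?_
  rw [CL, Subgroup.closure_le]
  rintro x (rfl | rfl | rfl)
  exacts [negI_mem2, V_mem2, B_mem2]

def Xinv : Matrix (Fin 2) (Fin 2) ℚ := !![1/2, -1/2; 0, 1]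

def coeQ (A : SL(2,ℤ)) : Matrix (Fin 2) (Fin 2) ℚ :=
  (A : Matrix (Fin 2) (Fin 2) ℤ).map (Int.cast : ℤ → ℚ)

lemma XXinv : Xmat * Xinv = 1 := by
  ext i j; fin_cases i <;> fin_cases j <;>
    norm_num [Xmat, Xinv, Matrix.mul_apply, Fin.sum_univ_two, Matrix.one_apply]

lemma XinvX : Xinv * Xmat = 1 := by
  ext i j; fin_cases i <;> fin_cases j <;>
    norm_num [Xmat, Xinv, Matrix.mul_apply, Fin.sum_univ_two, Matrix.one_apply]

lemma Xmat_inv : Xmat⁻¹ = Xinv := Matrix.inv_eq_right_inv XXinv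

lemma coeQ_mul (A B : SL(2,ℤ)) : coeQ (A * B) = coeQ A * coeQ B := by
  have hc : (Int.cast : ℤ → ℚ) = ⇑(Int.castRingHom ℚ) := rfl
  simp only [coeQ, Matrix.SpecialLinearGroup.coe_mul, hc, Matrix.map_mul]

lemma coeQ_one : coeQ 1 = 1 := by
  ext i j; fin_cases i <;> fin_cases j <;> simp [coeQ]

lemma coeQ_inv_mul (A : SL(2,ℤ)) : coeQ A⁻¹ * coeQ A = 1 := by
  rw [← coeQ_mul, inv_mul_cancel, coeQ_one]

lemma coeQ_mul_inv (A : SL(2,ℤ)) : coeQ A * coeQ A⁻¹ = 1 := by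
  rw [← coeQ_mul, mul_inv_cancel, coeQ_one]

lemma coeQ_inj {A B : SL(2,ℤ)} (h : coeQ A = coeQ B) : A = B := by
  apply Subtype.ext
  ext i j
  have h2 := congrFun (congrFun h i) j
  simp only [coeQ, Matrix.map_apply] at h2
  exact_mod_cast h2

lemma Xcancel (R : Matrix (Fin 2) (Fin 2) ℚ) : Xmat * (Xinv * R) = R := by
  rw [← Matrix.mul_assoc, XXinv, Matrix.one_mul]

lemma sandwich (P Q : Matrix (Fin 2) (Fin 2) ℚ) :
    (Xinv * P * Xmat) * (Xinv * Q * Xmat) = Xinv * (P * Q) * Xmat := by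
  simp only [Matrix.mul_assoc, Xcancel]

lemma conjXinv (B : SL(2,ℤ)) (C : SL(2,ℤ)) (h : Xinv * coeQ B * Xmat = coeQ C) :
    Xinv * coeQ B⁻¹ * Xmat = coeQ C⁻¹ := by
  have h1 : coeQ C * (Xinv * coeQ B⁻¹ * Xmat) = 1 := by
    rw [← h, sandwich, coeQ_mul_inv, Matrix.mul_one, XinvX]
  have h2 : coeQ C⁻¹ * coeQ C = 1 := coeQ_inv_mul C
  exact (left_inv_eq_right_inv h2 h1).symm


def Cmat : SL(2, ℤ) := ⟨!![-1, -2; 2, 3], by norm_num [Matrix.det_fin_two_of]⟩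

open CongruenceSubgroup in
lemma C_mem2 : Cmat ∈ Gamma 2 := by
  rw [Gamma_mem]; refine ⟨?_, ?_, ?_, ?_⟩ <;> decide


lemma negI_U : negI ∈ GammaU := Subgroup.subset_closure (by simp)
lemma V2_U : Vmat ^ 2 ∈ GammaU := Subgroup.subset_closure (by simp)
lemma VS_U : Vmat * Smat ∈ GammaU := Subgroup.subset_closure (by simp)
lemma SV_U : Smat * Vmat ∈ GammaU := Subgroup.subset_closure (by simp)

open CongruenceSubgroup in
lemma dir1 : ∀ B ∈ GammaU, ∃ C ∈ Gamma 2, Xinv * coeQ B * Xmat = coeQ C := by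
  intro B hB
  refine Subgroup.closure_induction ?_ ?_ ?_ ?_ hB
  · rintro x hx
    simp only [Set.mem_insert_iff, Set.mem_singleton_iff] at hx
    rcases hx with rfl | rfl | rfl | rfl
    · exact ⟨negI, negI_mem2, by
        ext i j; fin_cases i <;> fin_cases j <;>
          norm_num [coeQ, Xinv, Xmat, negI, Matrix.mul_apply, Fin.sum_univ_two, Matrix.vecMul, dotProduct, Matrix.map_apply]⟩
    · exact ⟨Vmat, V_mem2, by
        simp only [coeQ, Matrix.SpecialLinearGroup.coe_mul, Matrix.SpecialLinearGroup.coe_pow]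
        ext i j; fin_cases i <;> fin_cases j <;>
          norm_num [coeQ, Xinv, Xmat, Vmat, pow_two, Matrix.SpecialLinearGroup.coe_mul,
            Matrix.mul_apply, Fin.sum_univ_two, Matrix.vecMul, dotProduct, Matrix.map_apply]⟩
    · exact ⟨Bmat, B_mem2, by
        simp only [coeQ, Matrix.SpecialLinearGroup.coe_mul, Matrix.SpecialLinearGroup.coe_pow]
        ext i j; fin_cases i <;> fin_cases j <;>
          norm_num [coeQ, Xinv, Xmat, Vmat, Smat, Bmat, Matrix.SpecialLinearGroup.coe_mul,
            Matrix.mul_apply, Fin.sum_univ_two, Matrix.vecMul, dotProduct, Matrix.map_apply]⟩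
    · exact ⟨Cmat, C_mem2, by
        simp only [coeQ, Matrix.SpecialLinearGroup.coe_mul, Matrix.SpecialLinearGroup.coe_pow]
        ext i j; fin_cases i <;> fin_cases j <;>
          norm_num [coeQ, Xinv, Xmat, Vmat, Smat, Cmat, Matrix.SpecialLinearGroup.coe_mul,
            Matrix.mul_apply, Fin.sum_univ_two, Matrix.vecMul, dotProduct, Matrix.map_apply]⟩
  · exact ⟨1, one_mem _, by rw [coeQ_one, Matrix.mul_one, XinvX]⟩
  · rintro x y hx hy ⟨C₁, h₁, e₁⟩ ⟨C₂, h₂, e₂⟩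
    exact ⟨C₁ * C₂, mul_mem h₁ h₂, by rw [coeQ_mul, coeQ_mul, ← e₁, ← e₂, sandwich]⟩
  · rintro x hx ⟨C, h, e⟩
    exact ⟨C⁻¹, inv_mem h, conjXinv _ _ e⟩

open CongruenceSubgroup in
lemma dir2 : ∀ C ∈ Gamma 2, ∃ B ∈ GammaU, Xinv * coeQ B * Xmat = coeQ C := by
  intro C hC
  have hC' : C ∈ CL := gamma2_le_CL hC
  refine Subgroup.closure_induction ?_ ?_ ?_ ?_ hC'
  · rintro x hx
    simp only [Set.mem_insert_iff, Set.mem_singleton_iff] at hx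
    rcases hx with rfl | rfl | rfl
    · exact ⟨negI, negI_U, by
        ext i j; fin_cases i <;> fin_cases j <;>
          norm_num [coeQ, Xinv, Xmat, negI, Matrix.mul_apply, Fin.sum_univ_two, Matrix.vecMul, dotProduct, Matrix.map_apply]⟩
    · exact ⟨Vmat ^ 2, V2_U, by
        simp only [coeQ, Matrix.SpecialLinearGroup.coe_mul, Matrix.SpecialLinearGroup.coe_pow]
        ext i j; fin_cases i <;> fin_cases j <;>
          norm_num [coeQ, Xinv, Xmat, Vmat, pow_two, Matrix.SpecialLinearGroup.coe_mul,
            Matrix.mul_apply, Fin.sum_univ_two, Matrix.vecMul, dotProduct, Matrix.map_apply]⟩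
    · exact ⟨Vmat * Smat, VS_U, by
        simp only [coeQ, Matrix.SpecialLinearGroup.coe_mul, Matrix.SpecialLinearGroup.coe_pow]
        ext i j; fin_cases i <;> fin_cases j <;>
          norm_num [coeQ, Xinv, Xmat, Vmat, Smat, Bmat, Matrix.SpecialLinearGroup.coe_mul,
            Matrix.mul_apply, Fin.sum_univ_two, Matrix.vecMul, dotProduct, Matrix.map_apply]⟩
  · exact ⟨1, one_mem _, by rw [coeQ_one, Matrix.mul_one, XinvX]⟩
  · rintro x y hx hy ⟨B₁, h₁, e₁⟩ ⟨B₂, h₂, e₂⟩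
    exact ⟨B₁ * B₂, mul_mem h₁ h₂, by rw [coeQ_mul, coeQ_mul, ← e₁, ← e₂, sandwich]⟩
  · rintro x hx ⟨B, h, e⟩
    exact ⟨B⁻¹, inv_mem h, conjXinv _ _ e⟩

def fmod : SL(2,ℤ) →* Matrix.SpecialLinearGroup (Fin 2) (ZMod 4) :=
  Matrix.SpecialLinearGroup.map (Int.castRingHom (ZMod 4))

def Qpred (x : Matrix.SpecialLinearGroup (Fin 2) (ZMod 4)) : Prop :=
  x.1 0 0 + x.1 0 1 = x.1 1 0 + x.1 1 1 ∧
  (x.1 0 0 + x.1 1 0 = 1 ∨ x.1 0 0 + x.1 1 0 = 3) ∧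
  (x.1 1 0 + x.1 1 1 = 1 ∨ x.1 1 0 + x.1 1 1 = 3)

instance : DecidablePred Qpred := fun x => by unfold Qpred; infer_instance

def Qexp : Subgroup (Matrix.SpecialLinearGroup (Fin 2) (ZMod 4)) where
  carrier := {x | Qpred x}
  one_mem' := by decide
  mul_mem' := by intro a b ha hb; revert a b ha hb; decide
  inv_mem' := by intro a ha; revert a ha; decide

instance : DecidablePred (· ∈ Qexp) := fun x => decidable_of_iff (Qpred x) Iff.rfl

lemma fmod_apply (g : SL(2,ℤ)) (i j : Fin 2) : (fmod g).1 i j = ((g.1 i j : ℤ) : ZMod 4) := rfl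

lemma conj_cancel {P Q : Matrix (Fin 2) (Fin 2) ℚ} (h : Xinv * P * Xmat = Xinv * Q * Xmat) :
    P = Q := by
  calc P = (Xmat * Xinv) * P * (Xmat * Xinv) := by rw [XXinv]; simp
    _ = Xmat * (Xinv * P * Xmat) * Xinv := by simp only [Matrix.mul_assoc]
    _ = Xmat * (Xinv * Q * Xmat) * Xinv := by rw [h]
    _ = (Xmat * Xinv) * Q * (Xmat * Xinv) := by simp only [Matrix.mul_assoc]
    _ = Q := by rw [XXinv]; simp

open CongruenceSubgroup in
lemma comap_eq : GammaU = Subgroup.comap fmod Qexp := by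
  apply le_antisymm
  · rw [GammaU, Subgroup.closure_le]
    rintro x hx
    simp only [Set.mem_insert_iff, Set.mem_singleton_iff] at hx
    rcases hx with rfl | rfl | rfl | rfl <;>
      · show fmod _ ∈ Qexp
        decide
  · intro g hg
    have hq : Qpred (fmod g) := hg
    obtain ⟨h1, h2, h3⟩ := hq
    rw [fmod_apply, fmod_apply, fmod_apply, fmod_apply] at h1
    rw [fmod_apply, fmod_apply] at h2 h3
    have hdet : g.1 0 0 * g.1 1 1 - g.1 0 1 * g.1 1 0 = 1 := by
      have := g.2; rwa [Matrix.det_fin_two] at this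
    have e1 : (4:ℤ) ∣ (g.1 0 0 + g.1 0 1) - (g.1 1 0 + g.1 1 1) :=
      (castZ 4 _ _).mp (by push_cast; exact_mod_cast h1)
    have e2 : (4:ℤ) ∣ (g.1 0 0 + g.1 1 0) - 1 ∨ (4:ℤ) ∣ (g.1 0 0 + g.1 1 0) - 3 := by
      rcases h2 with h | h
      · exact Or.inl ((castZ 4 _ 1).mp (by push_cast; exact_mod_cast h))
      · exact Or.inr ((castZ 4 _ 3).mp (by push_cast; exact_mod_cast h))
    have e3 : (4:ℤ) ∣ (g.1 1 0 + g.1 1 1) - 1 ∨ (4:ℤ) ∣ (g.1 1 0 + g.1 1 1) - 3 := by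
      rcases h3 with h | h
      · exact Or.inl ((castZ 4 _ 1).mp (by push_cast; exact_mod_cast h))
      · exact Or.inr ((castZ 4 _ 3).mp (by push_cast; exact_mod_cast h))
    obtain ⟨k, hk⟩ := e1
    set a := g.1 0 0 with ha'
    set b := g.1 0 1 with hb'
    set c := g.1 1 0 with hc'
    set d := g.1 1 1 with hd'
    have hCdet : Matrix.det !![a - c, 2*k; 2*c, c + d] = 1 := by
      rw [Matrix.det_fin_two_of]
      linear_combination hdet + c * hk
    set Cg : SL(2,ℤ) := ⟨!![a - c, 2*k; 2*c, c + d], hCdet⟩ with hCg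
    have hCmem : Cg ∈ Gamma 2 := by
      rw [Gamma_mem]
      refine ⟨?_, ?_, ?_, ?_⟩
      · show ((a - c : ℤ) : ZMod 2) = 1
        rw [show (1 : ZMod 2) = ((1:ℤ) : ZMod 2) by norm_num, castZ]
        omega
      · show ((2*k : ℤ) : ZMod 2) = 0
        rw [show (0 : ZMod 2) = ((0:ℤ) : ZMod 2) by norm_num, castZ]
        omega
      · show ((2*c : ℤ) : ZMod 2) = 0
        rw [show (0 : ZMod 2) = ((0:ℤ) : ZMod 2) by norm_num, castZ]
        omega
      · show ((c + d : ℤ) : ZMod 2) = 1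
        rw [show (1 : ZMod 2) = ((1:ℤ) : ZMod 2) by norm_num, castZ]
        omega
    have hkQ : (a:ℚ) + b - (c + d) = 4*k := by exact_mod_cast hk
    have hCeq : Xinv * coeQ g * Xmat = coeQ Cg := by
      ext i j
      fin_cases i <;> fin_cases j <;>
        · simp [coeQ, Xinv, Xmat, Matrix.mul_apply, Fin.sum_univ_two, Matrix.map_apply, Matrix.vecMul, dotProduct, hCg]
          try push_cast
          try linarith [hkQ]
    obtain ⟨B, hB, e⟩ := dir2 Cg hCmem
    have : coeQ B = coeQ g := conj_cancel (by rw [e, hCeq])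
    rwa [← coeQ_inj this]

def liftTable : List (Matrix.SpecialLinearGroup (Fin 2) (ZMod 4) × SL(2,ℤ)) := [
  ((⟨!![1, 0; 0, 1], by rw [Matrix.det_fin_two_of]; decide⟩ : Matrix.SpecialLinearGroup (Fin 2) (ZMod 4)), (⟨!![(1:ℤ), 0; 0, 1], by norm_num [Matrix.det_fin_two_of]⟩ : SL(2,ℤ))),
  ((⟨!![0, 3; 1, 0], by rw [Matrix.det_fin_two_of]; decide⟩ : Matrix.SpecialLinearGroup (Fin 2) (ZMod 4)), (⟨!![(0:ℤ), -1; 1, 0], by norm_num [Matrix.det_fin_two_of]⟩ : SL(2,ℤ))),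
  ((⟨!![1, 1; 0, 1], by rw [Matrix.det_fin_two_of]; decide⟩ : Matrix.SpecialLinearGroup (Fin 2) (ZMod 4)), (⟨!![(1:ℤ), 1; 0, 1], by norm_num [Matrix.det_fin_two_of]⟩ : SL(2,ℤ))),
  ((⟨!![1, 3; 0, 1], by rw [Matrix.det_fin_two_of]; decide⟩ : Matrix.SpecialLinearGroup (Fin 2) (ZMod 4)), (⟨!![(1:ℤ), -1; 0, 1], by norm_num [Matrix.det_fin_two_of]⟩ : SL(2,ℤ))),
  ((⟨!![0, 1; 3, 0], by rw [Matrix.det_fin_two_of]; decide⟩ : Matrix.SpecialLinearGroup (Fin 2) (ZMod 4)), (⟨!![(0:ℤ), 1; -1, 0], by norm_num [Matrix.det_fin_two_of]⟩ : SL(2,ℤ))),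
  ((⟨!![3, 0; 0, 3], by rw [Matrix.det_fin_two_of]; decide⟩ : Matrix.SpecialLinearGroup (Fin 2) (ZMod 4)), (⟨!![(-1:ℤ), 0; 0, -1], by norm_num [Matrix.det_fin_two_of]⟩ : SL(2,ℤ))),
  ((⟨!![0, 3; 1, 1], by rw [Matrix.det_fin_two_of]; decide⟩ : Matrix.SpecialLinearGroup (Fin 2) (ZMod 4)), (⟨!![(0:ℤ), -1; 1, 1], by norm_num [Matrix.det_fin_two_of]⟩ : SL(2,ℤ))),
  ((⟨!![0, 3; 1, 3], by rw [Matrix.det_fin_two_of]; decide⟩ : Matrix.SpecialLinearGroup (Fin 2) (ZMod 4)), (⟨!![(0:ℤ), -1; 1, -1], by norm_num [Matrix.det_fin_two_of]⟩ : SL(2,ℤ))),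
  ((⟨!![1, 3; 1, 0], by rw [Matrix.det_fin_two_of]; decide⟩ : Matrix.SpecialLinearGroup (Fin 2) (ZMod 4)), (⟨!![(1:ℤ), -1; 1, 0], by norm_num [Matrix.det_fin_two_of]⟩ : SL(2,ℤ))),
  ((⟨!![1, 2; 0, 1], by rw [Matrix.det_fin_two_of]; decide⟩ : Matrix.SpecialLinearGroup (Fin 2) (ZMod 4)), (⟨!![(1:ℤ), 2; 0, 1], by norm_num [Matrix.det_fin_two_of]⟩ : SL(2,ℤ))),
  ((⟨!![3, 1; 3, 0], by rw [Matrix.det_fin_two_of]; decide⟩ : Matrix.SpecialLinearGroup (Fin 2) (ZMod 4)), (⟨!![(-1:ℤ), 1; -1, 0], by norm_num [Matrix.det_fin_two_of]⟩ : SL(2,ℤ))),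
  ((⟨!![3, 3; 1, 0], by rw [Matrix.det_fin_two_of]; decide⟩ : Matrix.SpecialLinearGroup (Fin 2) (ZMod 4)), (⟨!![(-1:ℤ), -1; 1, 0], by norm_num [Matrix.det_fin_two_of]⟩ : SL(2,ℤ))),
  ((⟨!![1, 1; 3, 0], by rw [Matrix.det_fin_two_of]; decide⟩ : Matrix.SpecialLinearGroup (Fin 2) (ZMod 4)), (⟨!![(1:ℤ), 1; -1, 0], by norm_num [Matrix.det_fin_two_of]⟩ : SL(2,ℤ))),
  ((⟨!![0, 1; 3, 3], by rw [Matrix.det_fin_two_of]; decide⟩ : Matrix.SpecialLinearGroup (Fin 2) (ZMod 4)), (⟨!![(0:ℤ), 1; -1, -1], by norm_num [Matrix.det_fin_two_of]⟩ : SL(2,ℤ))),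
  ((⟨!![0, 1; 3, 1], by rw [Matrix.det_fin_two_of]; decide⟩ : Matrix.SpecialLinearGroup (Fin 2) (ZMod 4)), (⟨!![(0:ℤ), 1; -1, 1], by norm_num [Matrix.det_fin_two_of]⟩ : SL(2,ℤ))),
  ((⟨!![3, 3; 0, 3], by rw [Matrix.det_fin_two_of]; decide⟩ : Matrix.SpecialLinearGroup (Fin 2) (ZMod 4)), (⟨!![(-1:ℤ), -1; 0, -1], by norm_num [Matrix.det_fin_two_of]⟩ : SL(2,ℤ))),
  ((⟨!![3, 1; 0, 3], by rw [Matrix.det_fin_two_of]; decide⟩ : Matrix.SpecialLinearGroup (Fin 2) (ZMod 4)), (⟨!![(-1:ℤ), 1; 0, -1], by norm_num [Matrix.det_fin_two_of]⟩ : SL(2,ℤ))),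
  ((⟨!![3, 0; 1, 3], by rw [Matrix.det_fin_two_of]; decide⟩ : Matrix.SpecialLinearGroup (Fin 2) (ZMod 4)), (⟨!![(-1:ℤ), 0; 1, -1], by norm_num [Matrix.det_fin_two_of]⟩ : SL(2,ℤ))),
  ((⟨!![0, 3; 1, 2], by rw [Matrix.det_fin_two_of]; decide⟩ : Matrix.SpecialLinearGroup (Fin 2) (ZMod 4)), (⟨!![(0:ℤ), -1; 1, 2], by norm_num [Matrix.det_fin_two_of]⟩ : SL(2,ℤ))),
  ((⟨!![1, 0; 3, 1], by rw [Matrix.det_fin_two_of]; decide⟩ : Matrix.SpecialLinearGroup (Fin 2) (ZMod 4)), (⟨!![(1:ℤ), 0; -1, 1], by norm_num [Matrix.det_fin_two_of]⟩ : SL(2,ℤ))),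
  ((⟨!![3, 0; 3, 3], by rw [Matrix.det_fin_two_of]; decide⟩ : Matrix.SpecialLinearGroup (Fin 2) (ZMod 4)), (⟨!![(-1:ℤ), 0; -1, -1], by norm_num [Matrix.det_fin_two_of]⟩ : SL(2,ℤ))),
  ((⟨!![1, 0; 1, 1], by rw [Matrix.det_fin_two_of]; decide⟩ : Matrix.SpecialLinearGroup (Fin 2) (ZMod 4)), (⟨!![(1:ℤ), 0; 1, 1], by norm_num [Matrix.det_fin_two_of]⟩ : SL(2,ℤ))),
  ((⟨!![1, 2; 1, 3], by rw [Matrix.det_fin_two_of]; decide⟩ : Matrix.SpecialLinearGroup (Fin 2) (ZMod 4)), (⟨!![(1:ℤ), -2; 1, -1], by norm_num [Matrix.det_fin_two_of]⟩ : SL(2,ℤ))),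
  ((⟨!![2, 3; 1, 0], by rw [Matrix.det_fin_two_of]; decide⟩ : Matrix.SpecialLinearGroup (Fin 2) (ZMod 4)), (⟨!![(2:ℤ), -1; 1, 0], by norm_num [Matrix.det_fin_two_of]⟩ : SL(2,ℤ))),
  ((⟨!![2, 1; 3, 0], by rw [Matrix.det_fin_two_of]; decide⟩ : Matrix.SpecialLinearGroup (Fin 2) (ZMod 4)), (⟨!![(-2:ℤ), 1; -1, 0], by norm_num [Matrix.det_fin_two_of]⟩ : SL(2,ℤ))),
  ((⟨!![3, 2; 3, 1], by rw [Matrix.det_fin_two_of]; decide⟩ : Matrix.SpecialLinearGroup (Fin 2) (ZMod 4)), (⟨!![(-1:ℤ), 2; -1, 1], by norm_num [Matrix.det_fin_two_of]⟩ : SL(2,ℤ))),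
  ((⟨!![3, 2; 1, 1], by rw [Matrix.det_fin_two_of]; decide⟩ : Matrix.SpecialLinearGroup (Fin 2) (ZMod 4)), (⟨!![(-1:ℤ), -2; 1, 1], by norm_num [Matrix.det_fin_two_of]⟩ : SL(2,ℤ))),
  ((⟨!![1, 2; 3, 3], by rw [Matrix.det_fin_two_of]; decide⟩ : Matrix.SpecialLinearGroup (Fin 2) (ZMod 4)), (⟨!![(1:ℤ), 2; -1, -1], by norm_num [Matrix.det_fin_two_of]⟩ : SL(2,ℤ))),
  ((⟨!![0, 1; 3, 2], by rw [Matrix.det_fin_two_of]; decide⟩ : Matrix.SpecialLinearGroup (Fin 2) (ZMod 4)), (⟨!![(0:ℤ), 1; -1, -2], by norm_num [Matrix.det_fin_two_of]⟩ : SL(2,ℤ))),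
  ((⟨!![3, 2; 0, 3], by rw [Matrix.det_fin_two_of]; decide⟩ : Matrix.SpecialLinearGroup (Fin 2) (ZMod 4)), (⟨!![(-1:ℤ), -2; 0, -1], by norm_num [Matrix.det_fin_two_of]⟩ : SL(2,ℤ))),
  ((⟨!![3, 1; 1, 2], by rw [Matrix.det_fin_two_of]; decide⟩ : Matrix.SpecialLinearGroup (Fin 2) (ZMod 4)), (⟨!![(-1:ℤ), 1; 1, -2], by norm_num [Matrix.det_fin_two_of]⟩ : SL(2,ℤ))),
  ((⟨!![3, 0; 2, 3], by rw [Matrix.det_fin_two_of]; decide⟩ : Matrix.SpecialLinearGroup (Fin 2) (ZMod 4)), (⟨!![(-1:ℤ), 0; 2, -1], by norm_num [Matrix.det_fin_two_of]⟩ : SL(2,ℤ))),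
  ((⟨!![1, 0; 2, 1], by rw [Matrix.det_fin_two_of]; decide⟩ : Matrix.SpecialLinearGroup (Fin 2) (ZMod 4)), (⟨!![(1:ℤ), 0; -2, 1], by norm_num [Matrix.det_fin_two_of]⟩ : SL(2,ℤ))),
  ((⟨!![1, 3; 3, 2], by rw [Matrix.det_fin_two_of]; decide⟩ : Matrix.SpecialLinearGroup (Fin 2) (ZMod 4)), (⟨!![(1:ℤ), -1; -1, 2], by norm_num [Matrix.det_fin_two_of]⟩ : SL(2,ℤ))),
  ((⟨!![3, 3; 3, 2], by rw [Matrix.det_fin_two_of]; decide⟩ : Matrix.SpecialLinearGroup (Fin 2) (ZMod 4)), (⟨!![(-1:ℤ), -1; -1, -2], by norm_num [Matrix.det_fin_two_of]⟩ : SL(2,ℤ))),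
  ((⟨!![1, 1; 1, 2], by rw [Matrix.det_fin_two_of]; decide⟩ : Matrix.SpecialLinearGroup (Fin 2) (ZMod 4)), (⟨!![(1:ℤ), 1; 1, 2], by norm_num [Matrix.det_fin_two_of]⟩ : SL(2,ℤ))),
  ((⟨!![2, 3; 3, 3], by rw [Matrix.det_fin_two_of]; decide⟩ : Matrix.SpecialLinearGroup (Fin 2) (ZMod 4)), (⟨!![(-2:ℤ), -1; -1, -1], by norm_num [Matrix.det_fin_two_of]⟩ : SL(2,ℤ))),
  ((⟨!![2, 1; 1, 1], by rw [Matrix.det_fin_two_of]; decide⟩ : Matrix.SpecialLinearGroup (Fin 2) (ZMod 4)), (⟨!![(2:ℤ), 1; 1, 1], by norm_num [Matrix.det_fin_two_of]⟩ : SL(2,ℤ))),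
  ((⟨!![2, 1; 1, 3], by rw [Matrix.det_fin_two_of]; decide⟩ : Matrix.SpecialLinearGroup (Fin 2) (ZMod 4)), (⟨!![(2:ℤ), -3; 1, -1], by norm_num [Matrix.det_fin_two_of]⟩ : SL(2,ℤ))),
  ((⟨!![2, 3; 3, 1], by rw [Matrix.det_fin_two_of]; decide⟩ : Matrix.SpecialLinearGroup (Fin 2) (ZMod 4)), (⟨!![(-2:ℤ), 3; -1, 1], by norm_num [Matrix.det_fin_two_of]⟩ : SL(2,ℤ))),
  ((⟨!![1, 1; 2, 3], by rw [Matrix.det_fin_two_of]; decide⟩ : Matrix.SpecialLinearGroup (Fin 2) (ZMod 4)), (⟨!![(1:ℤ), 1; -2, -1], by norm_num [Matrix.det_fin_two_of]⟩ : SL(2,ℤ))),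
  ((⟨!![3, 3; 2, 1], by rw [Matrix.det_fin_two_of]; decide⟩ : Matrix.SpecialLinearGroup (Fin 2) (ZMod 4)), (⟨!![(-1:ℤ), -1; 2, 1], by norm_num [Matrix.det_fin_two_of]⟩ : SL(2,ℤ))),
  ((⟨!![3, 1; 2, 1], by rw [Matrix.det_fin_two_of]; decide⟩ : Matrix.SpecialLinearGroup (Fin 2) (ZMod 4)), (⟨!![(-1:ℤ), 1; 2, -3], by norm_num [Matrix.det_fin_two_of]⟩ : SL(2,ℤ))),
  ((⟨!![1, 3; 2, 3], by rw [Matrix.det_fin_two_of]; decide⟩ : Matrix.SpecialLinearGroup (Fin 2) (ZMod 4)), (⟨!![(1:ℤ), -1; -2, 3], by norm_num [Matrix.det_fin_two_of]⟩ : SL(2,ℤ))),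
  ((⟨!![2, 1; 3, 2], by rw [Matrix.det_fin_two_of]; decide⟩ : Matrix.SpecialLinearGroup (Fin 2) (ZMod 4)), (⟨!![(-2:ℤ), -3; -1, -2], by norm_num [Matrix.det_fin_two_of]⟩ : SL(2,ℤ))),
  ((⟨!![2, 3; 1, 2], by rw [Matrix.det_fin_two_of]; decide⟩ : Matrix.SpecialLinearGroup (Fin 2) (ZMod 4)), (⟨!![(2:ℤ), 3; 1, 2], by norm_num [Matrix.det_fin_two_of]⟩ : SL(2,ℤ))),
  ((⟨!![1, 2; 2, 1], by rw [Matrix.det_fin_two_of]; decide⟩ : Matrix.SpecialLinearGroup (Fin 2) (ZMod 4)), (⟨!![(1:ℤ), 2; -2, -3], by norm_num [Matrix.det_fin_two_of]⟩ : SL(2,ℤ))),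
  ((⟨!![3, 2; 2, 3], by rw [Matrix.det_fin_two_of]; decide⟩ : Matrix.SpecialLinearGroup (Fin 2) (ZMod 4)), (⟨!![(-1:ℤ), -2; 2, 3], by norm_num [Matrix.det_fin_two_of]⟩ : SL(2,ℤ)))]

instance matDecEq : DecidableEq (Matrix (Fin 2) (Fin 2) (ZMod 4)) :=
  fun A B => @decidable_of_iff _ _ Matrix.ext_iff (@Fintype.decidableForallFintype _ _ (fun i => @Fintype.decidableForallFintype _ _ (fun j => ZMod.decidableEq 4 (A i j) (B i j)) _) _)

instance slDecEq : DecidableEq (Matrix.SpecialLinearGroup (Fin 2) (ZMod 4)) :=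
  fun a b => decidable_of_iff (a.1 = b.1) Subtype.ext_iff.symm

def liftFun (x : Matrix.SpecialLinearGroup (Fin 2) (ZMod 4)) : SL(2,ℤ) :=
  ((liftTable.find? (fun p => p.1 == x)).map Prod.snd).getD 1

lemma lift_works : ∀ x, fmod (liftFun x) = x := by decide

lemma fsurj : Function.Surjective fmod := fun x => ⟨liftFun x, lift_works x⟩

lemma index_six : GammaU.index = 6 := by
  rw [comap_eq, Subgroup.index_comap_of_surjective _ fsurj]
  have h1 : Nat.card (Matrix.SpecialLinearGroup (Fin 2) (ZMod 4)) = 48 := by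
    rw [Nat.card_eq_fintype_card]; decide
  have h2 : Nat.card Qexp = 8 := by
    rw [Nat.card_eq_fintype_card]; decide
  have h3 := Subgroup.card_mul_index Qexp
  rw [h1, h2] at h3
  omega

theorem GammaU_index_and_conjugate :
    Vmat = Tmat ^ 2 ∧
    GammaU.index = 6 ∧
    {A : Matrix (Fin 2) (Fin 2) ℚ | ∃ B ∈ GammaU,
        A = Xmat⁻¹ * ((B : Matrix (Fin 2) (Fin 2) ℤ)).map (Int.cast : ℤ → ℚ) * Xmat}
      = {A : Matrix (Fin 2) (Fin 2) ℚ | ∃ B ∈ CongruenceSubgroup.Gamma 2,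
        A = ((B : Matrix (Fin 2) (Fin 2) ℤ)).map (Int.cast : ℤ → ℚ)} := by
  refine ⟨Vmat_eq, index_six, ?_⟩
  ext A
  simp only [Set.mem_setOf_eq]
  constructor
  · rintro ⟨B, hB, rfl⟩
    obtain ⟨C, hC, e⟩ := dir1 B hB
    refine ⟨C, hC, ?_⟩
    rw [Xmat_inv]
    exact e
  · rintro ⟨C, hC, rfl⟩
    obtain ⟨B, hB, e⟩ := dir2 C hC
    refine ⟨B, hB, ?_⟩
    rw [Xmat_inv]
    exact e.symm
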